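/- Letting N → ∞ in the level-N identity Σ_{0<n_1<···<n_{c+2}<N} 1/(n_1^3 n_2^2···n_c^2 n_{c+1} n_{c+2}^2) + Σ_{0<n_1<···<n_c<n_{c+1}≤n_{c+2}<N} 1/(n_1^3 n_2^2···n_c^2 (N−n_{c+1}) n_{c+2}^2) = Σ_{0<n_1<···<n_{c+2}<N} 1/(n_1^2···n_{c+2}^2) + 2 Σ_{0<n_1<···<n_{c+1}<N} 1/(n_1^3 n_2^3 n_3^2···n_{c+1}^2), the second sum on the left tends to 0 and one recovers ζ(3,{2}^{c−1},1,2) = ζ({2}^{c+2}) + 2ζ(3,3,{2}^{c−1}). -/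

import Mathlib

set_option maxHeartbeats 1000000

/-- The truncated multiple zeta sum `∑_{0<n₁<⋯<n_r<N} 1/(n₁^{k₁}⋯n_r^{k_r})` over `ℚ`. -/
def truncMZV (N : ℕ) (ks : List ℕ) : ℚ :=
  ∑ n : Fin ks.length → Fin N,
    if (∀ i j : Fin ks.length, i < j → (n i : ℕ) < (n j : ℕ)) ∧ (∀ i, 0 < (n i : ℕ)) then
      ∏ i, (1 : ℚ) / ((n i : ℕ) : ℚ) ^ ks.get i
    else 0

/-- The second sum on the left-hand side:
`∑_{0<n₁<⋯<n_c<n_{c+1}≤n_{c+2}<N} 1/(n₁³ n₂²⋯n_c² (N−n_{c+1}) n_{c+2}²)`. -/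
def truncFlat (N c : ℕ) : ℚ :=
  ∑ n : Fin (c + 2) → Fin N,
    if (∀ i j : Fin (c + 2), (i : ℕ) < (j : ℕ) → (j : ℕ) ≤ c → (n i : ℕ) < (n j : ℕ))
        ∧ (∀ i j : Fin (c + 2), (i : ℕ) < (j : ℕ) → (n i : ℕ) ≤ (n j : ℕ))
        ∧ (∀ i, 0 < (n i : ℕ)) then
      ∏ i : Fin (c + 2),
        if (i : ℕ) = 0 then (1 : ℚ) / ((n i : ℕ) : ℚ) ^ 3
        else if (i : ℕ) = c then (1 : ℚ) / ((N : ℚ) - ((n i : ℕ) : ℚ))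
        else (1 : ℚ) / ((n i : ℕ) : ℚ) ^ 2
    else 0

/-- The multiple zeta value `ζ(k₁,…,k_r)`. -/
noncomputable def mzv (ks : List ℕ) : ℝ :=
  ∑' n : Fin ks.length → ℕ,
    if (∀ i j : Fin ks.length, i < j → n i < n j) ∧ (∀ i, 0 < n i) then
      ∏ i, (1 : ℝ) / (n i : ℝ) ^ ks.get i
    else 0

/-! ### Auxiliary definitions and lemmas -/

open Finset Filter

noncomputable def mzvTerm (ks : List ℕ) (n : Fin ks.length → ℕ) : ℝ :=
  if (∀ i j : Fin ks.length, i < j → n i < n j) ∧ (∀ i, 0 < n i) then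
    ∏ i, (1 : ℝ) / (n i : ℝ) ^ ks.get i
  else 0

lemma mzv_eq_tsum (ks : List ℕ) : mzv ks = ∑' n, mzvTerm ks n := rfl

lemma mzvTerm_nonneg (ks : List ℕ) (n : Fin ks.length → ℕ) : 0 ≤ mzvTerm ks n := by
  unfold mzvTerm; split
  · exact Finset.prod_nonneg fun i _ => by positivity
  · exact le_refl 0

lemma summable_pi_prod {r : ℕ} {g : ℕ → ℝ} (hg : Summable g) (hg0 : ∀ m, 0 ≤ g m) :
    Summable (fun n : Fin r → ℕ => ∏ i, g (n i)) := by
  induction r with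
  | zero => exact .of_finite
  | succ r ih =>
    have h2 : Summable (fun p : ℕ × (Fin r → ℕ) => g p.1 * ∏ i, g (p.2 i)) :=
      Summable.mul_of_nonneg (f := g) (g := fun n : Fin r → ℕ => ∏ i, g (n i)) hg ih
        (fun m => hg0 m) (fun n => Finset.prod_nonneg fun i _ => hg0 _)
    have h3 := ((Fin.insertNthEquiv (fun _ : Fin (r + 1) => ℕ) 0).symm.summable_iff
      (f := fun p : ℕ × (Fin r → ℕ) => g p.1 * ∏ i, g (p.2 i))).mpr h2
    refine h3.congr fun n => ?_
    simp [Fin.insertNthEquiv, Fin.prod_univ_succ]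
    exact Or.inl rfl

lemma mzvTerm_summable (l : List ℕ) (k : ℕ) (hk : 2 ≤ k) (hl : ∀ j ∈ l, 1 ≤ j) :
    Summable (mzvTerm (l ++ [k])) := by
  have hr : (l ++ [k]).length = l.length + 1 := by simp
  set r := (l ++ [k]).length with hrdef
  have hrpos : 0 < r := by omega
  set p : ℝ := 1 + 1/r with hp
  have hp1 : 1 < p := by
    rw [hp]; have : (0:ℝ) < 1/r := by positivity
    linarith
  have hgs : Summable (fun m : ℕ => ((m : ℝ) ^ p)⁻¹) := Real.summable_nat_rpow_inv.mpr hp1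
  have hgprod := summable_pi_prod (r := r) hgs (fun m => by positivity)
  refine hgprod.of_nonneg_of_le (fun n => mzvTerm_nonneg _ _) ?_
  intro n
  unfold mzvTerm
  split
  case isFalse => exact Finset.prod_nonneg fun i _ => by positivity
  case isTrue h =>
    obtain ⟨hmono, hpos⟩ := h
    have hone : ∀ i, (1 : ℝ) ≤ (n i : ℝ) := fun i => by exact_mod_cast hpos i
    have hone' : ∀ i, (0 : ℝ) < (n i : ℝ) := fun i => lt_of_lt_of_le one_pos (hone i)
    set last : Fin r := ⟨l.length, by omega⟩ with hlast
    have hklast : (l ++ [k]).get last = k := by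
      simp [hlast, List.get_eq_getElem]
    have hkge : ∀ i : Fin r, 1 ≤ (l ++ [k]).get i := by
      intro i
      have hmem : (l ++ [k]).get i ∈ l ++ [k] := by
        simpa using (l ++ [k]).get_mem i
      rcases List.mem_append.mp hmem with h' | h'
      · exact hl _ h'
      · rw [List.mem_singleton] at h'
        omega
    have hle : ∀ i, (n i : ℝ) ≤ (n last : ℝ) := by
      intro i
      rcases eq_or_ne i last with heq | hne
      · rw [heq]
      · have hlt : i < last := by
          rw [Fin.lt_def]
          have h1 := i.isLt
          have h2 : (i : ℕ) ≠ l.length := fun hh => hne (Fin.ext hh)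
          simp only [hlast]
          omega
        exact_mod_cast le_of_lt (hmono i last hlt)
    have hP1 : (1:ℝ) ≤ ∏ i, (n i : ℝ) := by
      calc (1:ℝ) = ∏ _i : Fin r, (1:ℝ) := by simp
        _ ≤ ∏ i, (n i : ℝ) := Finset.prod_le_prod (fun _ _ => zero_le_one) (fun i _ => hone i)
    have hPpos : (0:ℝ) < ∏ i, (n i : ℝ) := lt_of_lt_of_le one_pos hP1
    have stepA : ∏ i, (1 : ℝ) / (n i : ℝ) ^ (l ++ [k]).get i
        ≤ (∏ i, (n i : ℝ))⁻¹ * ((n last : ℝ))⁻¹ := by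
      have hA1 : ∏ i, (1 : ℝ) / (n i : ℝ) ^ (l ++ [k]).get i
          ≤ ∏ i, ((n i : ℝ))⁻¹ * (if i = last then ((n i : ℝ))⁻¹ else 1) := by
        refine Finset.prod_le_prod (fun i _ => by positivity) ?_
        intro i _
        rcases eq_or_ne i last with heq | hne
        · rw [if_pos heq, one_div, ← mul_inv, ← sq]
          refine inv_anti₀ (pow_pos (hone' i) 2) ?_
          refine pow_le_pow_right₀ (hone i) ?_
          rw [heq, hklast]; exact hk
        · rw [if_neg hne, mul_one, one_div]
          refine inv_anti₀ (hone' i) ?_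
          calc (n i : ℝ) = (n i : ℝ) ^ 1 := (pow_one _).symm
            _ ≤ (n i : ℝ) ^ (l ++ [k]).get i := pow_le_pow_right₀ (hone i) (hkge i)
      calc ∏ i, (1 : ℝ) / (n i : ℝ) ^ (l ++ [k]).get i
          ≤ ∏ i, ((n i : ℝ))⁻¹ * (if i = last then ((n i : ℝ))⁻¹ else 1) := hA1
        _ = (∏ i, ((n i : ℝ))⁻¹) * ∏ i, (if i = last then ((n i : ℝ))⁻¹ else 1) :=
            Finset.prod_mul_distrib
        _ = (∏ i, (n i : ℝ))⁻¹ * ((n last : ℝ))⁻¹ := by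
            rw [← Finset.prod_inv_distrib, Finset.prod_ite_eq' Finset.univ last
              (fun i => ((n i : ℝ))⁻¹)]
            simp
    have hPle : ∏ i, (n i : ℝ) ≤ (n last : ℝ) ^ (r : ℕ) := by
      calc ∏ i, (n i : ℝ) ≤ ∏ _i : Fin r, (n last : ℝ) :=
            Finset.prod_le_prod (fun i _ => le_of_lt (hone' i)) (fun i _ => hle i)
        _ = (n last : ℝ) ^ (r : ℕ) := by rw [Finset.prod_const]; simp
    have stepB : ((∏ i, (n i : ℝ)) ^ ((1:ℝ)/r)) ≤ (n last : ℝ) := by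
      calc (∏ i, (n i : ℝ)) ^ ((1:ℝ)/r) ≤ ((n last : ℝ) ^ (r:ℕ)) ^ ((1:ℝ)/r) :=
            Real.rpow_le_rpow (le_of_lt hPpos) hPle (by positivity)
        _ = (n last : ℝ) := by
            rw [← Real.rpow_natCast (n last : ℝ) r, ← Real.rpow_mul (by positivity)]
            rw [mul_one_div, div_self (by exact_mod_cast hrpos.ne'), Real.rpow_one]
    have hrw : ∏ i, ((n i : ℝ) ^ p)⁻¹
        = (∏ i, (n i : ℝ))⁻¹ * ((∏ i, (n i : ℝ)) ^ ((1:ℝ)/r))⁻¹ := by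
      rw [Finset.prod_inv_distrib, Real.finset_prod_rpow Finset.univ _
        (fun i _ => le_of_lt (hone' i)) p, hp, Real.rpow_add hPpos, Real.rpow_one, mul_inv]
    rw [hrw]
    refine stepA.trans ?_
    refine mul_le_mul_of_nonneg_left ?_ (by positivity)
    exact inv_anti₀ (by positivity) stepB

lemma truncMZV_tendsto (ks : List ℕ) (hs : Summable (mzvTerm ks)) :
    Tendsto (fun N : ℕ => ((truncMZV N ks : ℚ) : ℝ)) atTop (nhds (mzv ks)) := by
  classical
  have hmono : Monotone (fun N : ℕ =>
      Fintype.piFinset (fun _ : Fin ks.length => Finset.range N)) := by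
    intro a b hab
    exact Fintype.piFinset_subset _ _ (fun _ => Finset.range_subset_range.mpr hab)
  have hcov : ∀ x : Fin ks.length → ℕ, ∃ N : ℕ,
      x ∈ Fintype.piFinset (fun _ : Fin ks.length => Finset.range N) := by
    intro x
    refine ⟨(Finset.univ.sup x) + 1, ?_⟩
    rw [Fintype.mem_piFinset]
    intro idx
    rw [Finset.mem_range]
    exact Nat.lt_succ_of_le (Finset.le_sup (Finset.mem_univ idx))
  have htends := hs.hasSum.comp (tendsto_atTop_finset_of_monotone hmono hcov)
  rw [mzv_eq_tsum]
  refine Tendsto.congr' ?_ htends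
  filter_upwards [eventually_ge_atTop 1] with N hN
  have hcast : ((truncMZV N ks : ℚ) : ℝ)
      = ∑ n : Fin ks.length → Fin N, mzvTerm ks (fun i => (n i : ℕ)) := by
    rw [truncMZV, Rat.cast_sum]
    refine Finset.sum_congr rfl ?_
    intro n _
    by_cases hcond : (∀ i j : Fin ks.length, i < j → (n i : ℕ) < (n j : ℕ)) ∧ (∀ i, 0 < (n i : ℕ))
    · rw [if_pos hcond, mzvTerm, if_pos hcond]
      push_cast
      rfl
    · rw [if_neg hcond, mzvTerm, if_neg hcond]
      norm_num
  rw [Function.comp_apply, hcast]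
  refine (Finset.sum_nbij'
    (i := fun (m : Fin ks.length → ℕ) => fun idx => (⟨m idx % N, Nat.mod_lt _ hN⟩ : Fin N))
    (j := fun (n : Fin ks.length → Fin N) => fun idx => (n idx : ℕ)) ?_ ?_ ?_ ?_ ?_)
  · intro m _; exact Finset.mem_univ _
  · intro n _
    rw [Fintype.mem_piFinset]
    intro idx
    rw [Finset.mem_range]; exact (n idx).isLt
  · intro m hm
    funext idx
    have : m idx < N := by
      rw [Fintype.mem_piFinset] at hm
      simpa using hm idx
    simp [Nat.mod_eq_of_lt this]
  · intro n _
    funext idx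
    apply Fin.ext
    simp [Nat.mod_eq_of_lt (n idx).isLt]
  · intro m hm
    congr 1
    funext idx
    have : m idx < N := by
      rw [Fintype.mem_piFinset] at hm
      simpa using hm idx
    simp [Nat.mod_eq_of_lt this]


noncomputable def hFn : ℕ → ℝ := fun m => if m = 0 then 0 else 1 / (m : ℝ) ^ 2
noncomputable def psiFn : ℕ → ℝ := fun m => Real.sqrt m / (m : ℝ) ^ 2
noncomputable def uFn : ℕ → ℝ := fun m => if m = 0 then 0 else 1 / (m : ℝ)
noncomputable def vFn : ℕ → ℝ := fun m => if m = 0 then 0 else 1 / Real.sqrt m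
noncomputable def qrt (x : ℝ) : ℝ := Real.sqrt (Real.sqrt x)

lemma hFn_nonneg (m : ℕ) : 0 ≤ hFn m := by unfold hFn; split <;> positivity
lemma psiFn_nonneg (m : ℕ) : 0 ≤ psiFn m := by unfold psiFn; positivity
lemma uFn_nonneg (m : ℕ) : 0 ≤ uFn m := by unfold uFn; split <;> positivity
lemma vFn_nonneg (m : ℕ) : 0 ≤ vFn m := by unfold vFn; split <;> positivity

lemma sum_hFn_le (K : ℕ) : ∑ m ∈ Finset.range K, hFn m ≤ 2 := by
  have main : ∀ K : ℕ, 1 ≤ K → ∑ m ∈ Finset.range (K + 1), hFn m ≤ 2 - 1 / (K : ℝ) := by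
    intro K hK
    induction K, hK using Nat.le_induction with
    | base => norm_num [Finset.sum_range_succ, hFn]
    | succ K hK ih =>
      rw [Finset.sum_range_succ]
      have hterm : hFn (K + 1) = 1 / ((K : ℝ) + 1) ^ 2 := by
        simp [hFn]
      have hKr : (1:ℝ) ≤ (K:ℝ) := by exact_mod_cast hK
      have key : 1 / ((K : ℝ) + 1) ^ 2 ≤ 1 / (K : ℝ) - 1 / ((K : ℝ) + 1) := by
        rw [div_sub_div _ _ (by positivity) (by positivity)]
        rw [div_le_div_iff₀ (by positivity) (by positivity)]
        ring_nf
        nlinarith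
      push_cast
      push_cast at ih
      linarith [ih, hterm ▸ key]
  rcases K with _ | K
  · simp
  · rcases Nat.eq_zero_or_pos K with rfl | hK
    · norm_num [Finset.sum_range_succ, hFn]
    · have := main K hK
      have : ∑ m ∈ Finset.range (K + 1), hFn m ≤ 2 - 1 / (K:ℝ) := this
      have hpos : (0:ℝ) ≤ 1 / (K:ℝ) := by positivity
      linarith

lemma sqrt_facts (K : ℕ) : (Real.sqrt K) ^ 2 = (K:ℝ) ∧ 0 ≤ Real.sqrt K :=
  ⟨Real.sq_sqrt (by positivity), Real.sqrt_nonneg _⟩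

lemma sum_psiFn_le (K : ℕ) : ∑ m ∈ Finset.range K, psiFn m ≤ 3 := by
  have main : ∀ K : ℕ, 1 ≤ K →
      ∑ m ∈ Finset.range (K + 1), psiFn m ≤ 3 - 2 / Real.sqrt K := by
    intro K hK
    induction K, hK using Nat.le_induction with
    | base => norm_num [Finset.sum_range_succ, psiFn]
    | succ K hK ih =>
      rw [Finset.sum_range_succ]
      set x : ℝ := (K : ℝ) with hx
      have hx1 : (1:ℝ) ≤ x := by rw [hx]; exact_mod_cast hK
      set a := Real.sqrt x with ha
      set b := Real.sqrt (x + 1) with hb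
      have ha2 : a ^ 2 = x := Real.sq_sqrt (by linarith)
      have hb2 : b ^ 2 = x + 1 := Real.sq_sqrt (by linarith)
      have ha0 : 0 < a := Real.sqrt_pos.mpr (by linarith)
      have hb0 : 0 < b := Real.sqrt_pos.mpr (by linarith)
      have hba : a ≤ b := Real.sqrt_le_sqrt (by linarith)
      have hab : a * b ≤ x + 2 := by nlinarith [mul_nonneg ha0.le hb0.le]
      have key2 : a ≤ 2 * (x + 1) * (b - a) := by nlinarith [mul_nonneg ha0.le hb0.le]
      have hterm : psiFn (K + 1) = b / (x + 1) ^ 2 := by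
        unfold psiFn; push_cast; rw [← hb]
      have hstep : b / (x + 1) ^ 2 ≤ 2 / a - 2 / b := by
        rw [div_sub_div _ _ ha0.ne' hb0.ne', div_le_div_iff₀ (by positivity) (by positivity)]
        nlinarith [key2, hb2]
      have hcast : psiFn (K+1) ≤ 2 / Real.sqrt K - 2 / Real.sqrt (K+1) := by
        rw [hterm]
        push_cast
        rw [← hx, ← ha, ← hb]
        exact hstep
      have ihx : ∑ m ∈ Finset.range (K + 1), psiFn m ≤ 3 - 2 / a := ih
      have : (3:ℝ) - 2/a + (2/a - 2/b) = 3 - 2/b := by ring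
      push_cast
      rw [← hx, ← hb]
      push_cast at hcast
      rw [← hx, ← hb] at hcast
      linarith
  rcases K with _ | K
  · simp
  · rcases Nat.eq_zero_or_pos K with rfl | hK
    · norm_num [Finset.sum_range_succ, psiFn]
    · have h := main K hK
      have hpos : (0:ℝ) ≤ 2 / Real.sqrt K := by positivity
      linarith

lemma sum_vFn_le (K : ℕ) : ∑ m ∈ Finset.range K, vFn m ≤ 2 * Real.sqrt K := by
  have main : ∀ K : ℕ, 1 ≤ K →
      ∑ m ∈ Finset.range (K + 1), vFn m ≤ 2 * Real.sqrt K := by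
    intro K hK
    induction K, hK using Nat.le_induction with
    | base => norm_num [Finset.sum_range_succ, vFn]
    | succ K hK ih =>
      rw [Finset.sum_range_succ]
      set x : ℝ := (K : ℝ) with hx
      have hx1 : (1:ℝ) ≤ x := by rw [hx]; exact_mod_cast hK
      set a := Real.sqrt x with ha
      set b := Real.sqrt (x + 1) with hb
      have ha2 : a ^ 2 = x := Real.sq_sqrt (by linarith)
      have hb2 : b ^ 2 = x + 1 := Real.sq_sqrt (by linarith)
      have ha0 : 0 < a := Real.sqrt_pos.mpr (by linarith)
      have hb0 : 0 < b := Real.sqrt_pos.mpr (by linarith)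
      have hterm : vFn (K + 1) = 1 / b := by
        unfold vFn
        rw [if_neg (by omega)]
        push_cast
        rw [← hb]
      have hstep : 1 / b ≤ 2 * b - 2 * a := by
        rw [div_le_iff₀ hb0]
        nlinarith [mul_nonneg ha0.le hb0.le]
      have hcast : vFn (K+1) ≤ 2 * b - 2 * a := hterm ▸ hstep
      push_cast
      rw [← hx, ← hb]
      linarith [ih]
  rcases K with _ | K
  · simp
  · rcases Nat.eq_zero_or_pos K with rfl | hK
    · norm_num [Finset.sum_range_succ, vFn]
    · refine (main K hK).trans ?_
      have : Real.sqrt K ≤ Real.sqrt (K+1) := Real.sqrt_le_sqrt (by push_cast; linarith)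
      push_cast at this ⊢
      linarith

lemma qrt_nonneg (x : ℝ) : 0 ≤ qrt x := Real.sqrt_nonneg _

lemma sum_uFn_le (K : ℕ) : ∑ m ∈ Finset.range K, uFn m ≤ 4 * qrt K := by
  have main : ∀ K : ℕ, 1 ≤ K →
      ∑ m ∈ Finset.range (K + 1), uFn m ≤ 4 * qrt K := by
    intro K hK
    induction K, hK using Nat.le_induction with
    | base =>
      have : qrt 1 = 1 := by unfold qrt; rw [Real.sqrt_one, Real.sqrt_one]
      norm_num [Finset.sum_range_succ, uFn, this]
    | succ K hK ih =>
      rw [Finset.sum_range_succ]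
      set x : ℝ := (K : ℝ) with hx
      have hx1 : (1:ℝ) ≤ x := by rw [hx]; exact_mod_cast hK
      set a := qrt x with ha
      set b := qrt (x + 1) with hb
      have ha2 : (a ^ 2) ^ 2 = x := by
        rw [ha]; unfold qrt
        rw [Real.sq_sqrt (Real.sqrt_nonneg _), Real.sq_sqrt (by linarith)]
      have hb2 : (b ^ 2) ^ 2 = x + 1 := by
        rw [hb]; unfold qrt
        rw [Real.sq_sqrt (Real.sqrt_nonneg _), Real.sq_sqrt (by linarith)]
      have ha0 : 0 ≤ a := Real.sqrt_nonneg _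
      have hb0 : 0 < b := by
        rw [hb]; unfold qrt
        exact Real.sqrt_pos.mpr (Real.sqrt_pos.mpr (by linarith))
      have hb1 : 1 ≤ b := by
        have h1 : Real.sqrt 1 ≤ Real.sqrt (x+1) := Real.sqrt_le_sqrt (by linarith)
        rw [Real.sqrt_one] at h1
        have h2 : Real.sqrt 1 ≤ Real.sqrt (Real.sqrt (x+1)) := Real.sqrt_le_sqrt h1
        rw [Real.sqrt_one] at h2
        rw [hb]; unfold qrt; exact h2
      have hba : a ≤ b := by
        rw [ha, hb]; unfold qrt
        exact Real.sqrt_le_sqrt (Real.sqrt_le_sqrt (by linarith))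
      have hterm : uFn (K + 1) = 1 / (x + 1) := by
        unfold uFn
        rw [if_neg (by omega)]
        push_cast
        rw [← hx]
      have hstep : 1 / (x + 1) ≤ 4 * b - 4 * a := by
        rw [div_le_iff₀ (by linarith)]
        have hamg : 0 ≤ (b - a)^2 * (3*b^2 + 2*a*b + a^2) := by positivity
        nlinarith [hamg, mul_nonneg ha0 hb0.le]
      have hcast : uFn (K+1) ≤ 4 * b - 4 * a := hterm ▸ hstep
      push_cast
      rw [← hx]
      have : ((x:ℝ) + 1) = (x + 1) := rfl
      linarith [ih]
  rcases K with _ | K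
  · simp only [Finset.range_zero, Finset.sum_empty]
    exact mul_nonneg (by norm_num) (qrt_nonneg _)
  · rcases Nat.eq_zero_or_pos K with rfl | hK
    · have h1 : qrt 1 = 1 := by unfold qrt; rw [Real.sqrt_one, Real.sqrt_one]
      norm_num [Finset.sum_range_succ, uFn, h1]
    · refine (main K hK).trans ?_
      have : qrt K ≤ qrt (K+1) := by
        unfold qrt
        exact Real.sqrt_le_sqrt (Real.sqrt_le_sqrt (by push_cast; linarith))
      push_cast at this ⊢
      linarith

noncomputable def phiFn (N m : ℕ) : ℝ :=
  if m = 0 then 0 else 1 / (Real.sqrt m * ((N : ℝ) - m))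
noncomputable def wFn (N m : ℕ) : ℝ := if m = 0 then 0 else 1 / ((N : ℝ) - m)

lemma sum_wFn_le (N : ℕ) : ∑ m ∈ Finset.range N, wFn N m ≤ 4 * qrt N := by
  have heq : ∑ m ∈ Finset.range N, wFn N m = ∑ j ∈ Finset.range N, uFn j := by
    refine Finset.sum_nbij' (i := fun m => if m = 0 then 0 else N - m)
      (j := fun m => if m = 0 then 0 else N - m) ?_ ?_ ?_ ?_ ?_ <;>
      intro m hm <;> rw [Finset.mem_range] at hm <;>
      rcases Nat.eq_zero_or_pos m with rfl | h
    · simpa using hm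
    · rw [Finset.mem_range, if_neg (by omega)]; omega
    · simpa using hm
    · rw [Finset.mem_range, if_neg (by omega)]; omega
    · simp
    · simp only [if_neg h.ne']
      rw [if_neg (show ¬(N - m = 0) by omega)]; omega
    · simp
    · simp only [if_neg h.ne']
      rw [if_neg (show ¬(N - m = 0) by omega)]; omega
    · simp [wFn, uFn]
    · simp only [if_neg h.ne']
      rw [wFn, if_neg h.ne', uFn, if_neg (show ¬(N - m = 0) by omega)]
      congr 1
      have hc : ((N - m : ℕ) : ℝ) = (N : ℝ) - m := by
        push_cast [Nat.cast_sub (le_of_lt hm)]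
        ring
      rw [hc]
  rw [heq]
  exact sum_uFn_le N

lemma sum_phiFn_le (N : ℕ) (hN : 1 ≤ N) :
    ∑ m ∈ Finset.range N, phiFn N m ≤ 10 / qrt N := by
  have hNr : (1:ℝ) ≤ (N:ℝ) := by exact_mod_cast hN
  set s := Real.sqrt N with hs
  set q := qrt N with hq
  have hs2 : s ^ 2 = (N:ℝ) := Real.sq_sqrt (by linarith)
  have hq2 : q ^ 2 = s := by
    rw [hq, hs]; unfold qrt; exact Real.sq_sqrt (Real.sqrt_nonneg _)
  have hs1 : 1 ≤ s := by
    rw [hs, show (1:ℝ) = Real.sqrt 1 from (Real.sqrt_one).symm]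
    exact Real.sqrt_le_sqrt hNr
  have hq0' : 0 ≤ q := by rw [hq]; exact qrt_nonneg _
  have hq1 : 1 ≤ q := by nlinarith [hq2, hs1, hq0', sq_nonneg (q - 1)]
  have hq0 : 0 < q := by linarith
  have hs0 : 0 < s := by linarith
  -- pointwise bound
  have hpt : ∀ m ∈ Finset.range N, phiFn N m
      ≤ (2 / N) * vFn m + (Real.sqrt 2 / s) * wFn N m := by
    intro m hm
    rw [Finset.mem_range] at hm
    rcases Nat.eq_zero_or_pos m with rfl | hm1
    · simp [phiFn, vFn, wFn]
    · have hmr1 : (1:ℝ) ≤ (m:ℝ) := by exact_mod_cast hm1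
      have hmrN : (m:ℝ) ≤ (N:ℝ) - 1 := by
        have : m + 1 ≤ N := hm
        have := (Nat.cast_le (α := ℝ)).mpr this
        push_cast at this
        linarith
      have hA : (0:ℝ) < (N:ℝ) - m := by linarith
      have hsm : 0 < Real.sqrt m := Real.sqrt_pos.mpr (by linarith)
      have hsm2 : (Real.sqrt m) ^ 2 = (m:ℝ) := Real.sq_sqrt (by linarith)
      rw [phiFn, if_neg (by omega), vFn, if_neg (by omega), wFn, if_neg (by omega)]
      rcases le_or_gt (2 * m) N with hcase | hcase
      · have hA2 : (N:ℝ) / 2 ≤ (N:ℝ) - m := by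
          have : (2:ℝ) * m ≤ N := by exact_mod_cast hcase
          linarith
        have h1 : 1 / (Real.sqrt m * ((N:ℝ) - m)) ≤ (2 / N) * (1 / Real.sqrt m) := by
          rw [div_mul_div_comm, div_le_div_iff₀ (by positivity) (by positivity)]
          nlinarith [hsm, hA2]
        have h2 : 0 ≤ (Real.sqrt 2 / s) * (1 / ((N:ℝ) - m)) := by positivity
        linarith
      · have hsqm : s / Real.sqrt 2 ≤ Real.sqrt m := by
          rw [div_le_iff₀ (by positivity)]
          have h2m : (N:ℝ) ≤ 2 * m := by
            have : N ≤ 2 * m := le_of_lt hcase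
            exact_mod_cast this
          have hs22 : (Real.sqrt 2) ^ 2 = 2 := Real.sq_sqrt (by norm_num)
          have hb : 0 < Real.sqrt m * Real.sqrt 2 := mul_pos hsm (by positivity)
          have hsq : s ^ 2 ≤ (Real.sqrt m * Real.sqrt 2) ^ 2 := by
            rw [mul_pow, hsm2, hs22, hs2]; linarith
          nlinarith [hsq, hb, sq_nonneg (s - Real.sqrt m * Real.sqrt 2)]
        have h1 : 1 / (Real.sqrt m * ((N:ℝ) - m)) ≤ (Real.sqrt 2 / s) * (1 / ((N:ℝ) - m)) := by
          rw [div_mul_div_comm, div_le_div_iff₀ (by positivity) (by positivity)]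
          have : s / Real.sqrt 2 * ((N:ℝ) - m) ≤ Real.sqrt m * ((N:ℝ) - m) :=
            mul_le_mul_of_nonneg_right hsqm hA.le
          have hss : 0 < Real.sqrt 2 := by positivity
          rw [div_mul_eq_mul_div, div_le_iff₀ hss] at this
          nlinarith [this]
        have h2 : 0 ≤ (2 / N) * (1 / Real.sqrt m) := by positivity
        linarith
  have hsum := Finset.sum_le_sum hpt
  rw [Finset.sum_add_distrib, ← Finset.mul_sum, ← Finset.mul_sum] at hsum
  have hv := sum_vFn_le N
  have hw := sum_wFn_le N
  have hvn : (0:ℝ) ≤ 2 / N := by positivity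
  have hwn : (0:ℝ) ≤ Real.sqrt 2 / s := by positivity
  have step : ∑ m ∈ Finset.range N, phiFn N m ≤ (2/N) * (2*s) + (Real.sqrt 2/s) * (4*q) := by
    refine hsum.trans ?_
    have b1 : (2/(N:ℝ)) * (∑ m ∈ Finset.range N, vFn m) ≤ (2/N) * (2*s) := by
      refine mul_le_mul_of_nonneg_left ?_ hvn
      rw [hs]; exact hv
    have b2 : (Real.sqrt 2/s) * (∑ m ∈ Finset.range N, wFn N m) ≤ (Real.sqrt 2/s) * (4*q) := by
      refine mul_le_mul_of_nonneg_left ?_ hwn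
      rw [hq]; exact hw
    linarith
  refine step.trans ?_
  have hsqrt2 : Real.sqrt 2 ≤ 3/2 := by
    nlinarith [Real.sq_sqrt (show (0:ℝ) ≤ 2 by norm_num), Real.sqrt_nonneg 2]
  have e1 : (2/(N:ℝ)) * (2*s) = 4 / s := by
    rw [← hs2]; field_simp; ring
  have e2 : (Real.sqrt 2/s) * (4*q) = 4 * Real.sqrt 2 / q := by
    rw [← hq2]; field_simp
  rw [e1, e2]
  have hqs : q ≤ s := by nlinarith [hq2, hq1]
  have f1 : 4 / s ≤ 4 / q := by
    rw [div_le_div_iff₀ hs0 hq0]; nlinarith [hqs]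
  have f2 : 4 * Real.sqrt 2 / q ≤ 6 / q := by
    rw [div_le_div_iff₀ hq0 hq0]; nlinarith [hsqrt2, hq0]
  calc 4 / s + 4 * Real.sqrt 2 / q ≤ 4 / q + 6 / q := by linarith
    _ = 10 / q := by ring

lemma phiFn_nonneg (N m : ℕ) (h : m ≤ N) : 0 ≤ phiFn N m := by
  unfold phiFn; split
  · exact le_refl 0
  · have : (0:ℝ) ≤ (N:ℝ) - m := by
      have : (m:ℝ) ≤ N := by exact_mod_cast h
      linarith
    exact one_div_nonneg.mpr (mul_nonneg (Real.sqrt_nonneg _) this)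

lemma prod_split {M : Type*} [CommMonoid M] (c : ℕ) (F : Fin (c + 2) → M) :
    ∏ i, F i
      = (∏ i ∈ (Finset.univ.erase (⟨c + 1, by omega⟩ : Fin (c + 2))).erase ⟨c, by omega⟩, F i)
        * F ⟨c, by omega⟩ * F ⟨c + 1, by omega⟩ := by
  rw [Finset.prod_erase_mul _ _ (Finset.mem_erase.mpr
    ⟨Fin.ne_of_val_ne (Nat.ne_of_lt (Nat.lt_succ_self c)), Finset.mem_univ _⟩)]
  rw [Finset.prod_erase_mul _ _ (Finset.mem_univ _)]

lemma mem_split {c : ℕ} {i : Fin (c + 2)}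
    (h : i ∈ (Finset.univ.erase (⟨c + 1, by omega⟩ : Fin (c + 2))).erase ⟨c, by omega⟩) :
    (i : ℕ) < c := by
  rw [Finset.mem_erase, Finset.mem_erase] at h
  have h1 : (i : ℕ) ≠ c := fun hh => h.1 (Fin.ext hh)
  have h2 : (i : ℕ) ≠ c + 1 := fun hh => h.2.1 (Fin.ext hh)
  have := i.isLt
  omega

lemma pair_ineq (N a b : ℕ) (ha : 1 ≤ a) (hab : a ≤ b) (hbN : b < N) :
    1 / ((N:ℝ) - a) * (1 / (b:ℝ) ^ 2) ≤ phiFn N a * psiFn b := by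
  rw [phiFn, if_neg (by omega), psiFn]
  have haR : (1:ℝ) ≤ (a:ℝ) := by exact_mod_cast ha
  have habR : (a:ℝ) ≤ (b:ℝ) := by exact_mod_cast hab
  have hbNR : (b:ℝ) < (N:ℝ) := by exact_mod_cast hbN
  have hNa : (0:ℝ) < (N:ℝ) - a := by linarith
  have hb0 : (0:ℝ) < (b:ℝ) := by linarith
  have hsa : 1 ≤ Real.sqrt a := by
    rw [show (1:ℝ) = Real.sqrt 1 from Real.sqrt_one.symm]
    exact Real.sqrt_le_sqrt haR
  have hsab : Real.sqrt a ≤ Real.sqrt b := Real.sqrt_le_sqrt habR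
  rw [div_mul_div_comm, div_mul_div_comm, div_le_div_iff₀ (by positivity) (by positivity)]
  have key : 0 ≤ (Real.sqrt b - Real.sqrt a) * (((N:ℝ) - a) * (b:ℝ)^2) :=
    mul_nonneg (by linarith) (by positivity)
  nlinarith [key]

lemma truncFlat_nonneg (N c : ℕ) : (0:ℚ) ≤ truncFlat N c := by
  rw [truncFlat]
  refine Finset.sum_nonneg ?_
  intro n _
  split
  · refine Finset.prod_nonneg ?_
    intro i _
    have hiN : ((n i : ℕ) : ℚ) ≤ (N : ℚ) := by
      exact_mod_cast le_of_lt (n i).isLt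
    split
    · positivity
    · split
      · exact one_div_nonneg.mpr (by linarith)
      · positivity
  · exact le_refl 0

lemma truncFlat_zero (c : ℕ) : truncFlat 0 c = 0 := by
  rw [truncFlat]
  exact Finset.sum_eq_zero (fun n _ => absurd (n ⟨0, by omega⟩).isLt (Nat.not_lt_zero _))

lemma truncFlat_le (c : ℕ) (hc : 0 < c) (N : ℕ) (hN : 1 ≤ N) :
    ((truncFlat N c : ℚ) : ℝ) ≤ 2 ^ c * (10 / qrt N) * 3 := by
  classical
  set w : Fin (c+2) → Fin N → ℝ := fun i a =>
    if (i:ℕ) < c then hFn (a:ℕ) else if (i:ℕ) = c then phiFn N (a:ℕ) else psiFn (a:ℕ) with hw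
  have hwnn : ∀ i a, 0 ≤ w i a := by
    intro i a; rw [hw]; dsimp only
    split
    · exact hFn_nonneg _
    · split
      · exact phiFn_nonneg N _ (le_of_lt a.isLt)
      · exact psiFn_nonneg _
  -- Step 1 : termwise bound
  have step1 : ((truncFlat N c : ℚ) : ℝ) ≤ ∑ n : Fin (c+2) → Fin N, ∏ i, w i (n i) := by
    rw [truncFlat, Rat.cast_sum]
    refine Finset.sum_le_sum ?_
    intro n _
    by_cases hcond : (∀ i j : Fin (c + 2), (i : ℕ) < (j : ℕ) → (j : ℕ) ≤ c → (n i : ℕ) < (n j : ℕ))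
        ∧ (∀ i j : Fin (c + 2), (i : ℕ) < (j : ℕ) → (n i : ℕ) ≤ (n j : ℕ))
        ∧ (∀ i, 0 < (n i : ℕ))
    swap
    · rw [if_neg hcond, Rat.cast_zero]
      exact Finset.prod_nonneg fun i _ => hwnn i (n i)
    rw [if_pos hcond]
    obtain ⟨hstrict, hweak, hpos⟩ := hcond
    rw [Rat.cast_prod]
    set F : Fin (c+2) → ℝ := fun i =>
      ((if (i : ℕ) = 0 then (1 : ℚ) / ((n i : ℕ) : ℚ) ^ 3
        else if (i : ℕ) = c then (1 : ℚ) / ((N : ℚ) - ((n i : ℕ) : ℚ))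
        else (1 : ℚ) / ((n i : ℕ) : ℚ) ^ 2 : ℚ) : ℝ) with hF
    have hFnn : ∀ i, 0 ≤ F i := by
      intro i
      rw [hF]; dsimp only
      have hiN : ((n i : ℕ) : ℚ) ≤ (N : ℚ) := by exact_mod_cast le_of_lt (n i).isLt
      split
      · positivity
      · split
        · rw [Rat.cast_nonneg]
          exact one_div_nonneg.mpr (by linarith)
        · positivity
    rw [prod_split c F, prod_split c (fun i => w i (n i))]
    have hprodle : ∏ i ∈ (Finset.univ.erase (⟨c + 1, by omega⟩ : Fin (c + 2))).erase
          ⟨c, by omega⟩, F i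
        ≤ ∏ i ∈ (Finset.univ.erase (⟨c + 1, by omega⟩ : Fin (c + 2))).erase
          ⟨c, by omega⟩, w i (n i) := by
      refine Finset.prod_le_prod (fun i _ => hFnn i) ?_
      intro i hi
      have hilt : (i : ℕ) < c := mem_split hi
      have hx1 : 1 ≤ ((n i : ℕ) : ℝ) := by exact_mod_cast hpos i
      have hx0 : (0:ℝ) < ((n i : ℕ) : ℝ) := by linarith
      rw [hF, hw]; dsimp only
      rw [if_pos hilt]
      rcases eq_or_ne ((i : ℕ)) 0 with h0 | h0
      · rw [if_pos h0, hFn, if_neg (by have := hpos i; omega)]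
        push_cast
        exact one_div_le_one_div_of_le (pow_pos hx0 2) (pow_le_pow_right₀ hx1 (by omega))
      · rw [if_neg h0, if_neg (by omega : ¬((i:ℕ) = c)), hFn,
          if_neg (by have := hpos i; omega)]
        push_cast
        exact le_refl _
    have hFic : F ⟨c, by omega⟩ = 1 / ((N:ℝ) - ((n ⟨c, by omega⟩ : ℕ) : ℝ)) := by
      rw [hF]; dsimp only
      rw [if_neg (by omega : ¬(c = 0)), if_pos rfl]
      push_cast
      ring
    have hFic1 : F ⟨c + 1, by omega⟩ = 1 / ((n ⟨c + 1, by omega⟩ : ℕ) : ℝ) ^ 2 := by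
      rw [hF]; dsimp only
      rw [if_neg (by omega : ¬(c + 1 = 0)), if_neg (by omega : ¬(c + 1 = c))]
      push_cast
      ring
    have hWic : w ⟨c, by omega⟩ (n ⟨c, by omega⟩) = phiFn N (n ⟨c, by omega⟩ : ℕ) := by
      rw [hw]; dsimp only
      rw [if_neg (by omega : ¬(c < c)), if_pos rfl]
    have hWic1 : w ⟨c + 1, by omega⟩ (n ⟨c + 1, by omega⟩)
        = psiFn (n ⟨c + 1, by omega⟩ : ℕ) := by
      rw [hw]; dsimp only
      rw [if_neg (by omega : ¬(c + 1 < c)), if_neg (by omega : ¬(c + 1 = c))]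
    have hpair : F ⟨c, by omega⟩ * F ⟨c + 1, by omega⟩
        ≤ w ⟨c, by omega⟩ (n ⟨c, by omega⟩) * w ⟨c + 1, by omega⟩ (n ⟨c + 1, by omega⟩) := by
      rw [hFic, hFic1, hWic, hWic1]
      exact pair_ineq N _ _ (hpos _) (hweak _ _ (Nat.lt_succ_self c)) (n _).isLt
    calc (∏ i ∈ (Finset.univ.erase (⟨c + 1, by omega⟩ : Fin (c + 2))).erase ⟨c, by omega⟩, F i)
          * F ⟨c, by omega⟩ * F ⟨c + 1, by omega⟩
        = (∏ i ∈ (Finset.univ.erase (⟨c + 1, by omega⟩ : Fin (c + 2))).erase ⟨c, by omega⟩, F i)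
          * (F ⟨c, by omega⟩ * F ⟨c + 1, by omega⟩) := by ring
      _ ≤ (∏ i ∈ (Finset.univ.erase (⟨c + 1, by omega⟩ : Fin (c + 2))).erase ⟨c, by omega⟩,
            w i (n i))
          * (w ⟨c, by omega⟩ (n ⟨c, by omega⟩) * w ⟨c + 1, by omega⟩ (n ⟨c + 1, by omega⟩)) := by
          refine mul_le_mul hprodle hpair (mul_nonneg (hFnn _) (hFnn _)) ?_
          exact Finset.prod_nonneg fun i _ => hwnn i (n i)
      _ = (∏ i ∈ (Finset.univ.erase (⟨c + 1, by omega⟩ : Fin (c + 2))).erase ⟨c, by omega⟩,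
            w i (n i))
          * w ⟨c, by omega⟩ (n ⟨c, by omega⟩) * w ⟨c + 1, by omega⟩ (n ⟨c + 1, by omega⟩) := by
          ring
  -- Step 2 : factorize
  have step2 : ∑ n : Fin (c+2) → Fin N, ∏ i, w i (n i) = ∏ i, ∑ a : Fin N, w i a := by
    have h := Finset.prod_univ_sum (fun _ : Fin (c+2) => (Finset.univ : Finset (Fin N)))
      (fun i a => w i a)
    rw [Fintype.piFinset_univ] at h
    exact h.symm
  -- Step 3 : compute / bound the product of sums
  have hSh : ∑ a : Fin N, hFn (a : ℕ) ≤ 2 := by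
    rw [Fin.sum_univ_eq_sum_range (fun m => hFn m) N]
    exact sum_hFn_le N
  have hShnn : (0:ℝ) ≤ ∑ a : Fin N, hFn (a : ℕ) :=
    Finset.sum_nonneg fun a _ => hFn_nonneg _
  have hSphi : ∑ a : Fin N, phiFn N (a : ℕ) ≤ 10 / qrt N := by
    rw [Fin.sum_univ_eq_sum_range (fun m => phiFn N m) N]
    exact sum_phiFn_le N hN
  have hSphinn : (0:ℝ) ≤ ∑ a : Fin N, phiFn N (a : ℕ) :=
    Finset.sum_nonneg fun a _ => phiFn_nonneg N _ (le_of_lt a.isLt)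
  have hSpsi : ∑ a : Fin N, psiFn (a : ℕ) ≤ 3 := by
    rw [Fin.sum_univ_eq_sum_range (fun m => psiFn m) N]
    exact sum_psiFn_le N
  have hSpsinn : (0:ℝ) ≤ ∑ a : Fin N, psiFn (a : ℕ) :=
    Finset.sum_nonneg fun a _ => psiFn_nonneg _
  have step3 : ∏ i, ∑ a : Fin N, w i a ≤ 2 ^ c * (10 / qrt N) * 3 := by
    rw [prod_split c (fun i => ∑ a : Fin N, w i a)]
    have hmid : ∀ i ∈ (Finset.univ.erase (⟨c + 1, by omega⟩ : Fin (c + 2))).erase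
        ⟨c, by omega⟩, ∑ a : Fin N, w i a = ∑ a : Fin N, hFn (a : ℕ) := by
      intro i hi
      refine Finset.sum_congr rfl ?_
      intro a _
      rw [hw]; dsimp only
      rw [if_pos (mem_split hi)]
    have hcard : ((Finset.univ.erase (⟨c + 1, by omega⟩ : Fin (c + 2))).erase
        ⟨c, by omega⟩).card = c := by
      rw [Finset.card_erase_of_mem (Finset.mem_erase.mpr
        ⟨Fin.ne_of_val_ne (Nat.ne_of_lt (Nat.lt_succ_self c)), Finset.mem_univ _⟩)]
      rw [Finset.card_erase_of_mem (Finset.mem_univ _)]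
      simp
    have h1 : ∏ i ∈ (Finset.univ.erase (⟨c + 1, by omega⟩ : Fin (c + 2))).erase
        ⟨c, by omega⟩, (∑ a : Fin N, w i a) = (∑ a : Fin N, hFn (a : ℕ)) ^ c := by
      rw [Finset.prod_congr rfl hmid, Finset.prod_const, hcard]
    have h2 : ∑ a : Fin N, w ⟨c, by omega⟩ a = ∑ a : Fin N, phiFn N (a : ℕ) := by
      refine Finset.sum_congr rfl ?_
      intro a _
      rw [hw]; dsimp only
      rw [if_neg (by omega : ¬(c < c)), if_pos rfl]
    have h3 : ∑ a : Fin N, w ⟨c + 1, by omega⟩ a = ∑ a : Fin N, psiFn (a : ℕ) := by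
      refine Finset.sum_congr rfl ?_
      intro a _
      rw [hw]; dsimp only
      rw [if_neg (by omega : ¬(c + 1 < c)), if_neg (by omega : ¬(c + 1 = c))]
    rw [h1, h2, h3]
    have b1 : (∑ a : Fin N, hFn (a : ℕ)) ^ c ≤ 2 ^ c := pow_le_pow_left₀ hShnn hSh c
    refine mul_le_mul (mul_le_mul b1 hSphi hSphinn (by positivity)) hSpsi hSpsinn ?_
    exact mul_nonneg (by positivity) (div_nonneg (by norm_num) (qrt_nonneg _))
  calc ((truncFlat N c : ℚ) : ℝ) ≤ ∑ n : Fin (c+2) → Fin N, ∏ i, w i (n i) := step1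
    _ = ∏ i, ∑ a : Fin N, w i a := step2
    _ ≤ 2 ^ c * (10 / qrt N) * 3 := step3

lemma sqrt_tendsto_atTop : Filter.Tendsto Real.sqrt Filter.atTop Filter.atTop := by
  rw [Filter.tendsto_atTop_atTop]
  intro b
  refine ⟨b ^ 2, fun x hx => ?_⟩
  calc b ≤ |b| := le_abs_self b
    _ = Real.sqrt (b ^ 2) := (Real.sqrt_sq_eq_abs b).symm
    _ ≤ Real.sqrt x := Real.sqrt_le_sqrt hx

lemma summable1 (d : ℕ) :
    Summable (mzvTerm ([3] ++ List.replicate d 2 ++ [1, 2])) := by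
  have h : ([3] ++ List.replicate d 2 ++ [1, 2] : List ℕ)
      = ([3] ++ List.replicate d 2 ++ [1]) ++ [2] := by simp
  rw [h]
  refine mzvTerm_summable _ 2 le_rfl ?_
  intro j hj
  simp [List.mem_replicate] at hj
  omega

lemma summable2 (c : ℕ) : Summable (mzvTerm (List.replicate (c + 2) 2)) := by
  have h : (List.replicate (c + 2) 2 : List ℕ) = List.replicate (c + 1) 2 ++ [2] :=
    List.replicate_succ'
  rw [h]
  refine mzvTerm_summable _ 2 le_rfl ?_
  intro j hj
  simp [List.mem_replicate] at hj
  omega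

lemma summable3 (d : ℕ) : Summable (mzvTerm ([3, 3] ++ List.replicate d 2)) := by
  cases d with
  | zero =>
    have h : ([3, 3] ++ List.replicate 0 2 : List ℕ) = [3] ++ [3] := by simp
    rw [h]
    refine mzvTerm_summable _ 3 (by norm_num) ?_
    intro j hj
    simp at hj
    omega
  | succ e =>
    have h : ([3, 3] ++ List.replicate (e + 1) 2 : List ℕ)
        = ([3, 3] ++ List.replicate e 2) ++ [2] := by
      rw [List.replicate_succ', ← List.append_assoc]
    rw [h]
    refine mzvTerm_summable _ 2 le_rfl ?_
    intro j hj
    simp [List.mem_replicate] at hj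
    omega

open Filter in
/-- Letting `N → ∞` in the level-`N` identity: assuming the identity at every level `N`,
the second sum on the left tends to `0`, each truncated multiple zeta sum converges to
the corresponding MZV, and one recovers Hoffman's identity
`ζ(3,{2}^{c−1},1,2) = ζ({2}^{c+2}) + 2ζ(3,3,{2}^{c−1})`. -/
theorem hoffman_from_levelN (c : ℕ) (hc : 0 < c)
    (hlevel : ∀ N : ℕ,
      truncMZV N ([3] ++ List.replicate (c - 1) 2 ++ [1, 2]) + truncFlat N c
        = truncMZV N (List.replicate (c + 2) 2)
          + 2 * truncMZV N ([3, 3] ++ List.replicate (c - 1) 2)) :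
    Tendsto (fun N : ℕ => ((truncFlat N c : ℚ) : ℝ)) atTop (nhds 0)
    ∧ Tendsto (fun N : ℕ =>
        ((truncMZV N ([3] ++ List.replicate (c - 1) 2 ++ [1, 2]) : ℚ) : ℝ)) atTop
        (nhds (mzv ([3] ++ List.replicate (c - 1) 2 ++ [1, 2])))
    ∧ Tendsto (fun N : ℕ =>
        ((truncMZV N (List.replicate (c + 2) 2) : ℚ) : ℝ)) atTop
        (nhds (mzv (List.replicate (c + 2) 2)))
    ∧ Tendsto (fun N : ℕ =>
        ((truncMZV N ([3, 3] ++ List.replicate (c - 1) 2) : ℚ) : ℝ)) atTop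
        (nhds (mzv ([3, 3] ++ List.replicate (c - 1) 2)))
    ∧ mzv ([3] ++ List.replicate (c - 1) 2 ++ [1, 2])
        = mzv (List.replicate (c + 2) 2) + 2 * mzv ([3, 3] ++ List.replicate (c - 1) 2) := by
  have t1 := truncMZV_tendsto _ (summable1 (c - 1))
  have t2 := truncMZV_tendsto _ (summable2 c)
  have t3 := truncMZV_tendsto _ (summable3 (c - 1))
  have hflat : Tendsto (fun N : ℕ => ((truncFlat N c : ℚ) : ℝ)) atTop (nhds 0) := by
    have hq : Tendsto (fun N : ℕ => qrt (N : ℝ)) atTop atTop :=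
      (sqrt_tendsto_atTop.comp sqrt_tendsto_atTop).comp tendsto_natCast_atTop_atTop
    have h10 : Tendsto (fun N : ℕ => 10 / qrt (N : ℝ)) atTop (nhds 0) :=
      Tendsto.div_atTop tendsto_const_nhds hq
    have hb : Tendsto (fun N : ℕ => 2 ^ c * (10 / qrt (N : ℝ)) * 3) atTop (nhds 0) := by
      have := (h10.const_mul ((2:ℝ) ^ c)).mul_const 3
      simpa using this
    refine squeeze_zero (fun N => by exact_mod_cast truncFlat_nonneg N c) ?_ hb
    intro N
    rcases Nat.eq_zero_or_pos N with rfl | hN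
    · rw [truncFlat_zero, Rat.cast_zero]
      exact mul_nonneg (mul_nonneg (by positivity)
        (div_nonneg (by norm_num) (qrt_nonneg _))) (by norm_num)
    · exact truncFlat_le c hc N hN
  refine ⟨hflat, t1, t2, t3, ?_⟩
  have heq : ∀ N : ℕ,
      ((truncMZV N ([3] ++ List.replicate (c - 1) 2 ++ [1, 2]) : ℚ) : ℝ)
        + ((truncFlat N c : ℚ) : ℝ)
      = ((truncMZV N (List.replicate (c + 2) 2) : ℚ) : ℝ)
        + 2 * ((truncMZV N ([3, 3] ++ List.replicate (c - 1) 2) : ℚ) : ℝ) := by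
    intro N
    exact_mod_cast congrArg (fun q : ℚ => (q : ℝ)) (hlevel N)
  have hA := t1.add hflat
  have hB : Tendsto (fun N : ℕ =>
      ((truncMZV N ([3] ++ List.replicate (c - 1) 2 ++ [1, 2]) : ℚ) : ℝ)
        + ((truncFlat N c : ℚ) : ℝ)) atTop
      (nhds (mzv (List.replicate (c + 2) 2)
        + 2 * mzv ([3, 3] ++ List.replicate (c - 1) 2))) := by
    refine Tendsto.congr (fun N => (heq N).symm) ?_
    exact t2.add (t3.const_mul 2)
  have huniq := tendsto_nhds_unique hA hB
  linarith [huniq]
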